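/- Let T > 0 and let α, β, λ, ε, μ > 0 be constants satisfying λ ≥ α + εμ/(4β). Let χ : [0,T] → ℝ³ be a differentiable trajectory, χ̇ₛ : [0,T] → ℝ³ a commanded safe velocity, h : ℝ³ × ℝ → ℝ a differentiable function, and V : [0,T] → ℝ a differentiable function such that for all t ∈ [0,T]: (i) V(t) ≥ β‖χ'(t) − χ̇ₛ(t)‖², (ii) V'(t) ≤ −λ V(t), and (iii) the input-to-state safe condition ⟨∇_χ h(χ(t),t), χ̇ₛ(t)⟩ + ∂ₜh(χ(t),t) ≥ −α h(χ(t),t) + (1/ε)‖∇_χ h(χ(t),t)‖² holds. Define B(t) = h(χ(t),t) − (1/μ) V(t). If B(0) ≥ 0, then B(t) ≥ 0 for all t ∈ [0,T]. -/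

import Mathlib

open scoped RealInnerProductSpace

/-- Trajectory-level content of Theorem 1 (Full-Order System Safety):
under the tracking CLF bounds and the ISSf-CBF condition on the safe velocity
command, with parameters satisfying `λ ≥ α + εμ/(4β)`, the barrier candidate
`B(t) = h(χ(t),t) − V(t)/μ` remains nonnegative on `[0,T]` if it starts nonnegative. -/
theorem full_order_system_safety
    (T α β lam ε μ : ℝ)
    (hT : 0 < T) (hα : 0 < α) (hβ : 0 < β) (hlam : 0 < lam) (hε : 0 < ε) (hμ : 0 < μ)
    (hparam : lam ≥ α + ε * μ / (4 * β))
    (χ χs : ℝ → EuclideanSpace ℝ (Fin 3))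
    (h : EuclideanSpace ℝ (Fin 3) × ℝ → ℝ)
    (V : ℝ → ℝ)
    (hχ : ∀ t ∈ Set.Icc (0 : ℝ) T, DifferentiableAt ℝ χ t)
    (hh : Differentiable ℝ h)
    (hV : ∀ t ∈ Set.Icc (0 : ℝ) T, DifferentiableAt ℝ V t)
    (hVlb : ∀ t ∈ Set.Icc (0 : ℝ) T, V t ≥ β * ‖deriv χ t - χs t‖ ^ 2)
    (hVdecay : ∀ t ∈ Set.Icc (0 : ℝ) T, deriv V t ≤ -lam * V t)
    (hISSf : ∀ t ∈ Set.Icc (0 : ℝ) T,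
      ⟪gradient (fun x => h (x, t)) (χ t), χs t⟫ + deriv (fun s => h (χ t, s)) t
        ≥ -α * h (χ t, t) + (1 / ε) * ‖gradient (fun x => h (x, t)) (χ t)‖ ^ 2)
    (hB0 : h (χ 0, 0) - (1 / μ) * V 0 ≥ 0) :
    ∀ t ∈ Set.Icc (0 : ℝ) T, h (χ t, t) - (1 / μ) * V t ≥ 0 := by
  set B : ℝ → ℝ := fun t => h (χ t, t) - (1 / μ) * V t with hBdef
  -- Key: at every point of [0,T], B has a derivative b with b ≥ -α * B t
  have key : ∀ t ∈ Set.Icc (0 : ℝ) T, ∃ b, HasDerivAt B b t ∧ b ≥ -α * B t := by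
    intro t ht
    have hχt := hχ t ht
    have hp : HasDerivAt (fun s => (χ s, s)) (deriv χ t, (1 : ℝ)) t :=
      HasDerivAt.prodMk (hχt.hasDerivAt) (hasDerivAt_id t)
    have hφ : HasDerivAt (fun s => h (χ s, s)) (fderiv ℝ h (χ t, t) (deriv χ t, 1)) t := by
      exact HasFDerivAt.comp_hasDerivAt (f := fun s => (χ s, s)) t
        (hh (χ t, t)).hasFDerivAt hp
    -- spatial partial derivative via the gradient
    have hxincl : HasFDerivAt (fun x : EuclideanSpace ℝ (Fin 3) => (x, t))
        ((ContinuousLinearMap.id ℝ (EuclideanSpace ℝ (Fin 3))).prod 0) (χ t) :=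
      HasFDerivAt.prodMk (hasFDerivAt_id (χ t)) (hasFDerivAt_const t (χ t))
    have hxpart : HasFDerivAt (fun x : EuclideanSpace ℝ (Fin 3) => h (x, t))
        ((fderiv ℝ h (χ t, t)).comp
          ((ContinuousLinearMap.id ℝ (EuclideanSpace ℝ (Fin 3))).prod 0)) (χ t) :=
      (hh (χ t, t)).hasFDerivAt.comp (χ t) hxincl
    have hgrad : ∀ v : EuclideanSpace ℝ (Fin 3),
        ⟪gradient (fun x => h (x, t)) (χ t), v⟫ = fderiv ℝ h (χ t, t) (v, 0) := by
      intro v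
      have hfd : fderiv ℝ (fun x : EuclideanSpace ℝ (Fin 3) => h (x, t)) (χ t)
          = (fderiv ℝ h (χ t, t)).comp
              ((ContinuousLinearMap.id ℝ (EuclideanSpace ℝ (Fin 3))).prod 0) := hxpart.fderiv
      rw [gradient, InnerProductSpace.toDual_symm_apply, hfd]
      simp
    -- time partial derivative
    have htpart : HasDerivAt (fun s => h (χ t, s)) (fderiv ℝ h (χ t, t) (0, 1)) t :=
      (hh (χ t, t)).hasFDerivAt.comp_hasDerivAt t
        (HasDerivAt.prodMk (hasDerivAt_const t (χ t)) (hasDerivAt_id t))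
    have htval : deriv (fun s => h (χ t, s)) t = fderiv ℝ h (χ t, t) (0, 1) := htpart.deriv
    -- split the total derivative
    have hsplit : fderiv ℝ h (χ t, t) (deriv χ t, 1)
        = ⟪gradient (fun x => h (x, t)) (χ t), deriv χ t⟫ + deriv (fun s => h (χ t, s)) t := by
      have : (deriv χ t, (1 : ℝ)) = (deriv χ t, (0 : ℝ)) + ((0 : EuclideanSpace ℝ (Fin 3)), 1) := by
        simp [Prod.ext_iff]
      rw [this, map_add, hgrad, htval]
    -- the derivative of B
    have hBd : HasDerivAt B (fderiv ℝ h (χ t, t) (deriv χ t, 1) - 1 / μ * deriv V t) t :=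
      hφ.sub (((hV t ht).hasDerivAt).const_mul (1 / μ))
    refine ⟨_, hBd, ?_⟩
    -- now prove the inequality
    set G := gradient (fun x => h (x, t)) (χ t) with hG
    set w := ‖deriv χ t - χs t‖ with hw
    have hw0 : 0 ≤ w := norm_nonneg _
    have hIS := hISSf t ht
    have hVl := hVlb t ht
    have hVd := hVdecay t ht
    have hVnn : 0 ≤ V t := le_trans (by positivity) hVl
    have hinner : ⟪G, deriv χ t⟫ = ⟪G, χs t⟫ + ⟪G, deriv χ t - χs t⟫ := by
      rw [← inner_add_right]
      congr 1
      abel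
    have hCS : ⟪G, deriv χ t - χs t⟫ ≥ -(‖G‖ * w) := by
      have := abs_real_inner_le_norm G (deriv χ t - χs t)
      have h2 := neg_abs_le ⟪G, deriv χ t - χs t⟫
      rw [hw]; linarith
    have hYoung : (1 / ε) * ‖G‖ ^ 2 + (ε / 4) * w ^ 2 ≥ ‖G‖ * w := by
      rw [ge_iff_le, ← sub_nonneg]
      have hkey : (1 / ε) * ‖G‖ ^ 2 + (ε / 4) * w ^ 2 - ‖G‖ * w
          = (1 / ε) * (‖G‖ - ε * w / 2) ^ 2 := by
        field_simp; ring
      rw [hkey]; positivity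
    -- combine
    have e1 : -(1 / μ * deriv V t) ≥ (lam / μ) * V t := by
      have h1 := mul_le_mul_of_nonneg_left hVd (le_of_lt (one_div_pos.mpr hμ))
      have h3 : (1 / μ) * (-lam * V t) = -(lam / μ * V t) := by ring
      linarith
    have e2 : (ε / 4) * w ^ 2 ≤ (ε / (4 * β)) * V t := by
      have h1 : β * w ^ 2 ≤ V t := hVl
      have h2 : (ε / (4 * β)) * (β * w ^ 2) ≤ (ε / (4 * β)) * V t :=
        mul_le_mul_of_nonneg_left h1 (by positivity)
      have h3 : (ε / (4 * β)) * (β * w ^ 2) = (ε / 4) * w ^ 2 := by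
        field_simp
      linarith
    have e3 : (lam / μ) * V t ≥ (α / μ) * V t + (ε / (4 * β)) * V t := by
      have hc : lam / μ - α / μ - ε / (4 * β) ≥ 0 := by
        rw [ge_iff_le, ← sub_nonneg] at hparam
        have : lam / μ - α / μ - ε / (4 * β) = (lam - (α + ε * μ / (4 * β))) / μ := by
          field_simp; ring
        rw [this]; positivity
      nlinarith [mul_nonneg hc hVnn]
    have hBval : B t = h (χ t, t) - 1 / μ * V t := rfl
    rw [hsplit, hinner, hBval]
    have e4 : -α * (h (χ t, t) - 1 / μ * V t) = -α * h (χ t, t) + (α / μ) * V t := by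
      field_simp; ring
    rw [ge_iff_le, e4]
    linarith [hIS, hCS, hYoung, e1, e2, e3]
  -- Grönwall: g t = exp(α t) * B t is monotone on [0,T]
  set g : ℝ → ℝ := fun t => Real.exp (α * t) * B t with hgdef
  have hgd : ∀ t ∈ Set.Icc (0 : ℝ) T, ∃ d, HasDerivAt g d t ∧ 0 ≤ d := by
    intro t ht
    obtain ⟨b, hb, hbge⟩ := key t ht
    have hexp : HasDerivAt (fun s => Real.exp (α * s)) (Real.exp (α * t) * α) t := by
      have : HasDerivAt (fun s : ℝ => α * s) α t := by
        simpa using (hasDerivAt_id t).const_mul α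
      exact this.exp
    refine ⟨Real.exp (α * t) * α * B t + Real.exp (α * t) * b, hexp.mul hb, ?_⟩
    have : Real.exp (α * t) * α * B t + Real.exp (α * t) * b
        = Real.exp (α * t) * (b - (-α * B t)) := by ring
    rw [this]
    have hexp0 : 0 < Real.exp (α * t) := Real.exp_pos _
    have : 0 ≤ b - (-α * B t) := by linarith
    positivity
  have hmono : MonotoneOn g (Set.Icc (0 : ℝ) T) := by
    apply monotoneOn_of_deriv_nonneg (convex_Icc 0 T)
    · intro t ht
      obtain ⟨d, hd, _⟩ := hgd t ht
      exact hd.continuousAt.continuousWithinAt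
    · intro t ht
      have ht' : t ∈ Set.Icc (0 : ℝ) T := interior_subset ht
      obtain ⟨d, hd, _⟩ := hgd t ht'
      exact hd.differentiableAt.differentiableWithinAt
    · intro t ht
      have ht' : t ∈ Set.Icc (0 : ℝ) T := interior_subset ht
      obtain ⟨d, hd, hd0⟩ := hgd t ht'
      rw [hd.deriv]; exact hd0
  intro t ht
  have h0mem : (0 : ℝ) ∈ Set.Icc (0 : ℝ) T := ⟨le_refl 0, le_of_lt hT⟩
  have := hmono h0mem ht ht.1
  have hg0 : g 0 = B 0 := by simp [hgdef]
  have hgt : g t = Real.exp (α * t) * B t := rfl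
  have hB0' : B 0 ≥ 0 := hB0
  have hgt0 : 0 ≤ g t := by rw [hg0] at this; linarith
  have hexp0 : 0 < Real.exp (α * t) := Real.exp_pos _
  have hBt : 0 ≤ B t := by
    by_contra hc
    push_neg at hc
    have : Real.exp (α * t) * B t < 0 := mul_neg_of_pos_of_neg hexp0 hc
    rw [← hgt] at this
    linarith
  exact hBt
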